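/- Let Q be an even lattice, ν an isometry of Q with ν^m = Id (and ⟨ν^{m/2}α,α⟩ ∈ 2ℤ if m is even), ω a primitive m-th root of unity. Define C(α,β) = ∏_{p ∈ ℤ_m} (−ω^{−p})^{⟨α, ν^p β⟩}. Then C is bimultiplicative, C(α,β)C(β,α) = 1, and C(να, νβ) = C(α,β) for all α, β ∈ Q. -/

import Mathlib

open Finset

/-- The standard bilinear form on `ℤ^N`. -/
def form {N : ℕ} (α β : Fin N → ℤ) : ℤ := ∑ k, α k * β k

/-- The function `C(α,β) = ∏_{p ∈ ℤ_m} (−ω^{−p})^{⟨α, ν^p β⟩}`. -/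
noncomputable def Cfun (N m : ℕ) (ω : ℂ) (ν : AddAut (Fin N → ℤ))
    (α β : Fin N → ℤ) : ℂ :=
  ∏ p ∈ Finset.range m, (-ω ^ (-(p : ℤ))) ^ form α ((p • ν) β)

lemma form_comm {N : ℕ} (α β : Fin N → ℤ) : form α β = form β α := by
  simp [form, mul_comm]

lemma form_add_left {N : ℕ} (α α' β : Fin N → ℤ) :
    form (α + α') β = form α β + form α' β := by
  simp [form, add_mul, Finset.sum_add_distrib]

lemma form_add_right {N : ℕ} (α β β' : Fin N → ℤ) :
    form α (β + β') = form α β + form α β' := by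
  simp [form, mul_add, Finset.sum_add_distrib]

lemma form_pow_inv {N : ℕ} (ν : AddAut (Fin N → ℤ))
    (hiso : ∀ α β, form (ν α) (ν β) = form α β) :
    ∀ (k : ℕ) (x y : Fin N → ℤ), form ((k • ν) x) ((k • ν) y) = form x y := by
  intro k
  induction k with
  | zero => simp
  | succ n ih =>
    intro x y
    have h1 : ((n+1) • ν) x = ν ((n • ν) x) := by rw [succ_nsmul']; rfl
    have h2 : ((n+1) • ν) y = ν ((n • ν) y) := by rw [succ_nsmul']; rfl
    rw [h1, h2, hiso, ih]

/-- For an even lattice `Q ⊆ ℤ^N`, an isometry `ν` of `Q` with `ν^m = Id`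
(and `⟨ν^{m/2}α, α⟩` even when `m` is even), and a primitive `m`-th root of unity
`ω`, the function `C(α,β) = ∏_{p∈ℤ_m}(−ω^{−p})^{⟨α,ν^pβ⟩}` is bimultiplicative,
satisfies `C(α,β)C(β,α) = 1`, and is `ν`-invariant. -/
theorem Cfun_properties (N m : ℕ) (hm : 0 < m) (ω : ℂ) (hω : IsPrimitiveRoot ω m)
    (Q : AddSubgroup (Fin N → ℤ))
    (hQeven : ∀ α ∈ Q, Even (form α α))
    (ν : AddAut (Fin N → ℤ))
    (hiso : ∀ α β, form (ν α) (ν β) = form α β)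
    (hνQ : ∀ α ∈ Q, ν α ∈ Q)
    (hord : m • ν = 0)
    (hA5 : Even m → ∀ α ∈ Q, Even (form (((m / 2) • ν) α) α)) :
    ∀ α ∈ Q, ∀ β ∈ Q, ∀ α' ∈ Q, ∀ β' ∈ Q,
      Cfun N m ω ν (α + α') β = Cfun N m ω ν α β * Cfun N m ω ν α' β ∧
      Cfun N m ω ν α (β + β') = Cfun N m ω ν α β * Cfun N m ω ν α β' ∧
      Cfun N m ω ν α β * Cfun N m ω ν β α = 1 ∧
      Cfun N m ω ν (ν α) (ν β) = Cfun N m ω ν α β := by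
  have hω0 : ω ≠ 0 := hω.ne_zero hm.ne'
  have hbase : ∀ p : ℕ, (-ω ^ (-(p : ℤ))) ≠ 0 :=
    fun p => neg_ne_zero.mpr (zpow_ne_zero _ hω0)
  intro α hα β hβ α' hα' β' hβ'
  refine ⟨?_, ?_, ?_, ?_⟩
  · -- additivity in the first argument
    unfold Cfun
    rw [← Finset.prod_mul_distrib]
    refine Finset.prod_congr rfl fun p _ => ?_
    rw [form_add_left, zpow_add₀ (hbase p)]
  · -- additivity in the second argument
    unfold Cfun
    rw [← Finset.prod_mul_distrib]
    refine Finset.prod_congr rfl fun p _ => ?_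
    rw [map_add, form_add_right, zpow_add₀ (hbase p)]
  · -- C(α,β) C(β,α) = 1
    have key : Cfun N m ω ν β α
        = ∏ p ∈ Finset.range m, (-ω ^ (p : ℤ)) ^ form α ((p • ν) β) := by
      unfold Cfun
      refine Finset.prod_nbij' (fun p => (m - p) % m) (fun p => (m - p) % m)
        (fun a ha => Finset.mem_range.mpr (Nat.mod_lt _ hm))
        (fun a ha => Finset.mem_range.mpr (Nat.mod_lt _ hm)) ?_ ?_ ?_
      · intro p hp
        have hp' : p < m := Finset.mem_range.mp hp
        show (m - (m - p) % m) % m = p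
        rcases Nat.eq_zero_or_pos p with h0 | h0
        · simp [h0, Nat.mod_self]
        · rw [Nat.mod_eq_of_lt (show m - p < m by omega),
            show m - (m - p) = p by omega, Nat.mod_eq_of_lt hp']
      · intro p hp
        have hp' : p < m := Finset.mem_range.mp hp
        show (m - (m - p) % m) % m = p
        rcases Nat.eq_zero_or_pos p with h0 | h0
        · simp [h0, Nat.mod_self]
        · rw [Nat.mod_eq_of_lt (show m - p < m by omega),
            show m - (m - p) = p by omega, Nat.mod_eq_of_lt hp']
      · intro p hp
        have hp' : p < m := Finset.mem_range.mp hp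
        set q := (m - p) % m with hqdef
        have hq : q + p = 0 ∨ q + p = m := by
          rcases Nat.eq_zero_or_pos p with h0 | h0
          · left; simp [hqdef, h0, Nat.mod_self]
          · right; rw [hqdef, Nat.mod_eq_of_lt (by omega)]; omega
        -- bases agree
        have hpow1 : ω ^ q * ω ^ p = 1 := by
          rw [← pow_add]
          rcases hq with h | h
          · rw [h, pow_zero]
          · rw [h, hω.pow_eq_one]
        have hbase_eq : ω ^ (-(p : ℤ)) = ω ^ (q : ℤ) := by
          rw [zpow_neg, zpow_natCast, zpow_natCast]
          exact (eq_inv_of_mul_eq_one_left hpow1).symm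
        -- exponents agree
        have hpow2 : ((q + p) • ν) α = α := by
          rcases hq with h | h
          · rw [h, zero_nsmul]; rfl
          · rw [h, hord]; rfl
        have hexp : form β ((p • ν) α) = form α ((q • ν) β) := by
          rw [← form_pow_inv ν hiso q β ((p • ν) α)]
          have : (q • ν) ((p • ν) α) = α := by
            rw [← AddAut.add_apply, ← add_nsmul, hpow2]
          rw [this, form_comm]
        rw [hbase_eq, hexp]
    rw [key]
    unfold Cfun
    rw [← Finset.prod_mul_distrib]
    have : ∀ p ∈ Finset.range m,
        (-ω ^ (-(p : ℤ))) ^ form α ((p • ν) β) * (-ω ^ (p : ℤ)) ^ form α ((p • ν) β)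
          = 1 := by
      intro p hp
      rw [← mul_zpow, neg_mul_neg, ← zpow_add₀ hω0, neg_add_cancel, zpow_zero, one_zpow]
    rw [Finset.prod_congr rfl this, Finset.prod_const_one]
  · -- ν-invariance
    unfold Cfun
    refine Finset.prod_congr rfl fun p _ => ?_
    have hcomm : (p • ν) (ν β) = ν ((p • ν) β) := by
      rw [← AddAut.add_apply, ← succ_nsmul, succ_nsmul', AddAut.add_apply]
    rw [hcomm, hiso]
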